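/- Line-of-sight range between a satellite at altitude h and a ground station on the Earth's surface: a point x with ‖x‖ = Rₑ + h and a point y with ‖y‖ = Rₑ have line-of-sight (the open segment between them contains no point of norm < Rₑ) if and only if ‖x − y‖ ≤ √((Rₑ+h)² − Rₑ²), i.e., iff the angle at y between the segment and the local vertical is at most 90 degrees (the satellite is at or above the horizon). -/

import Mathlib

/-- Line-of-sight between a satellite at altitude `h` and a ground station on the
surface: the open segment avoids the open ball of radius `Re` iff `⟨x − y, y⟩ ≥ 0`
(satellite at or above the horizon), iff `‖x − y‖² ≤ (Re+h)² − Re²`. -/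
theorem stmt15 (Re h : ℝ) (hRe : 0 < Re) (hh : 0 < h)
    (x y : EuclideanSpace ℝ (Fin 3))
    (hx : ‖x‖ = Re + h) (hy : ‖y‖ = Re) :
    ((∀ lam ∈ Set.Ioo (0 : ℝ) 1, Re ≤ ‖(1 - lam) • x + lam • y‖) ↔
      0 ≤ (inner ℝ (x - y) y : ℝ)) ∧
    ((0 ≤ (inner ℝ (x - y) y : ℝ)) ↔ ‖x - y‖ ^ 2 ≤ (Re + h) ^ 2 - Re ^ 2) := by
  set c : ℝ := inner ℝ x y with hc
  have hs : (inner ℝ (x - y) y : ℝ) = c - Re ^ 2 := by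
    rw [inner_sub_left, real_inner_self_eq_norm_sq, hy, ← hc]
  have hd : ‖x - y‖ ^ 2 = (Re + h) ^ 2 - 2 * c + Re ^ 2 := by
    rw [norm_sub_sq_real, hx, hy]
  have hnorm : ∀ lam : ℝ, ‖(1 - lam) • x + lam • y‖ ^ 2 =
      (1 - lam) ^ 2 * (Re + h) ^ 2 + 2 * (1 - lam) * lam * c + lam ^ 2 * Re ^ 2 := by
    intro lam
    rw [norm_add_sq_real, norm_smul, norm_smul, real_inner_smul_left,
      real_inner_smul_right, hx, hy, ← hc]
    simp [mul_pow, Real.norm_eq_abs, sq_abs]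
    ring
  have hdnn : (0:ℝ) ≤ ‖x - y‖ ^ 2 := sq_nonneg _
  constructor
  · constructor
    · intro H
      by_contra hneg
      push_neg at hneg
      rw [hs] at hneg
      have hdpos : 0 < ‖x - y‖ ^ 2 := by
        rcases lt_or_eq_of_le hdnn with h1 | h1
        · exact h1
        · exfalso
          rw [hd] at h1
          nlinarith
      set d : ℝ := ‖x - y‖ ^ 2 with hdd
      set t : ℝ := min (1/2) ((Re ^ 2 - c) / d) with ht
      have htpos : 0 < t := lt_min (by norm_num) (div_pos (by linarith) hdpos)
      have ht2 : t ≤ 1/2 := min_le_left _ _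
      have ht3 : t * d ≤ Re ^ 2 - c := by
        have := min_le_right (1/2) ((Re ^ 2 - c) / d)
        calc t * d ≤ ((Re ^ 2 - c) / d) * d := by nlinarith
          _ = Re ^ 2 - c := by field_simp
      have hmem : (1 - t) ∈ Set.Ioo (0:ℝ) 1 := ⟨by linarith, by linarith⟩
      have hH := H (1 - t) hmem
      have hsq : Re ^ 2 ≤ ‖(1 - (1 - t)) • x + (1 - t) • y‖ ^ 2 := by
        have := norm_nonneg ((1 - (1 - t)) • x + (1 - t) • y)
        nlinarith
      rw [hnorm (1 - t)] at hsq
      rw [hd] at ht3 hdpos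
      nlinarith
    · intro hs0 lam hlam
      rw [hs] at hs0
      obtain ⟨h0, h1⟩ := hlam
      have key : Re ^ 2 ≤ ‖(1 - lam) • x + lam • y‖ ^ 2 := by
        rw [hnorm lam, hd] at *
        nlinarith [mul_nonneg (mul_nonneg (by linarith : (0:ℝ) ≤ 1 - lam) (by linarith : (0:ℝ) ≤ 1 - lam)) hdnn, mul_nonneg (by linarith : (0:ℝ) ≤ 1 - lam) hs0]
      have := norm_nonneg ((1 - lam) • x + lam • y)
      nlinarith
  · rw [hs, hd]
    constructor <;> intro <;> linarith
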